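/- Suppose the dynamics are F(x,a,ε) = b(x,a) + σ(x,a)ε where b and σ are Lipschitz in (x,a) with constants [b]_L and [σ]_L, and ε ~ N(0, I_d). Then (HF) holds with C(ε) = [b]_L + [σ]_L ‖ε‖_d, and ρ_M := E[sup_{1≤m≤M} C(ε^m)] (for i.i.d. copies ε^m of ε) satisfies ρ_M ≤ [b]_L + d[σ]_L √(2 log(2dM)); in particular ρ_M = O(√(log M)) as M → ∞. -/

import Mathlib

open MeasureTheory Filter Real ProbabilityTheory Asymptotics
open scoped ENNReal NNReal

noncomputable section

/-- Euclidean state/control spaces. -/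
abbrev Sp (d : ℕ) : Type := EuclideanSpace ℝ (Fin d)

namespace RGB

lemma le_csup {ι : Type*} [Finite ι] (f : ι → ℝ) (i : ι) : f i ≤ ⨆ j, f j :=
  le_ciSup (Set.Finite.bddAbove (Set.finite_range f)) i

lemma pdf_mul (t x : ℝ) :
    gaussianPDFReal 0 1 x * rexp (t * x) = rexp (t ^ 2 / 2) * gaussianPDFReal t 1 x := by
  simp only [gaussianPDFReal, NNReal.coe_one, mul_one, sub_zero]
  rw [mul_assoc, ← Real.exp_add, mul_comm (rexp (t ^ 2 / 2)), mul_assoc, ← Real.exp_add]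
  congr 1
  rw [Real.exp_eq_exp]
  ring

lemma gaussian_density :
    gaussianReal 0 1 = volume.withDensity (fun x => ((gaussianPDFReal 0 1 x).toNNReal : ℝ≥0∞)) := by
  rw [gaussianReal_of_var_ne_zero 0 one_ne_zero]; rfl

lemma integral_eq (g : ℝ → ℝ) :
    ∫ x, g x ∂(gaussianReal 0 1) = ∫ x, gaussianPDFReal 0 1 x * g x := by
  rw [gaussian_density,
    integral_withDensity_eq_integral_smul (measurable_gaussianPDFReal 0 1).real_toNNReal g]
  exact integral_congr_ae (Filter.Eventually.of_forall fun x => by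
    simp only [NNReal.smul_def, Real.coe_toNNReal _ (gaussianPDFReal_nonneg 0 1 x), smul_eq_mul])

lemma integrable_iff (g : ℝ → ℝ) :
    Integrable g (gaussianReal 0 1)
      ↔ Integrable (fun x => gaussianPDFReal 0 1 x * g x) volume := by
  rw [gaussian_density,
    integrable_withDensity_iff_integrable_smul (measurable_gaussianPDFReal 0 1).real_toNNReal]
  exact integrable_congr (Filter.Eventually.of_forall fun x => by
    simp only [NNReal.smul_def, Real.coe_toNNReal _ (gaussianPDFReal_nonneg 0 1 x), smul_eq_mul])

lemma mgf (t : ℝ) : ∫ x, rexp (t * x) ∂(gaussianReal 0 1) = rexp (t ^ 2 / 2) := by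
  rw [integral_eq]
  calc ∫ x, gaussianPDFReal 0 1 x * rexp (t * x)
      = ∫ x, rexp (t ^ 2 / 2) * gaussianPDFReal t 1 x := by simp_rw [pdf_mul]
    _ = rexp (t ^ 2 / 2) := by
        rw [integral_const_mul, integral_gaussianPDFReal_eq_one t one_ne_zero, mul_one]

lemma exp_integrable (t : ℝ) : Integrable (fun x => rexp (t * x)) (gaussianReal 0 1) := by
  rw [integrable_iff]
  have h : (fun x => gaussianPDFReal 0 1 x * rexp (t * x))
      = fun x => rexp (t ^ 2 / 2) * gaussianPDFReal t 1 x := funext (pdf_mul t)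
  rw [h]
  exact (integrable_gaussianPDFReal t 1).const_mul _

lemma integrable_id : Integrable (fun x : ℝ => x) (gaussianReal 0 1) := by
  rw [integrable_iff]
  have h : (fun x : ℝ => gaussianPDFReal 0 1 x * x)
      = fun x : ℝ => (Real.sqrt (2 * π))⁻¹ * (x * rexp (-2⁻¹ * x ^ 2)) := by
    ext x
    simp only [gaussianPDFReal, NNReal.coe_one, mul_one, sub_zero]
    rw [show -x ^ 2 / 2 = -2⁻¹ * x ^ 2 by ring]
    ring
  rw [h]
  exact (integrable_mul_exp_neg_mul_sq (by norm_num : (0:ℝ) < 2⁻¹)).const_mul _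

lemma comp_integrable {Ω : Type*} [MeasurableSpace Ω] {P : Measure Ω} {X : Ω → ℝ}
    (hX : Measurable X) (hlaw : Measure.map X P = gaussianReal 0 1)
    {g : ℝ → ℝ} (hg : Measurable g) (hgi : Integrable g (gaussianReal 0 1)) :
    Integrable (fun ω => g (X ω)) P := by
  rw [← hlaw] at hgi
  exact (integrable_map_measure hg.aestronglyMeasurable hX.aemeasurable).mp hgi

lemma comp_integral {Ω : Type*} [MeasurableSpace Ω] {P : Measure Ω} {X : Ω → ℝ}
    (hX : Measurable X) (hlaw : Measure.map X P = gaussianReal 0 1) {g : ℝ → ℝ}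
    (hg : Measurable g) :
    ∫ ω, g (X ω) ∂P = ∫ x, g x ∂(gaussianReal 0 1) := by
  rw [← hlaw]
  exact (integral_map hX.aemeasurable hg.aestronglyMeasurable).symm

lemma exp_moment {Ω : Type*} [MeasurableSpace Ω] {P : Measure Ω} {X : Ω → ℝ}
    (hX : Measurable X) (hlaw : Measure.map X P = gaussianReal 0 1) (s : ℝ) :
    ∫ ω, rexp (s * X ω) ∂P = rexp (s ^ 2 / 2) := by
  have h := comp_integral hX hlaw (g := fun x => rexp (s * x))
    (Real.measurable_exp.comp (measurable_id.const_mul s))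
  simpa using h.trans (mgf s)

/-- Expectation of the max of finitely many (not necessarily independent) standard
Gaussians is at most `√(2 log (2K))`. -/
lemma max_bound {Ω : Type*} [MeasurableSpace Ω] (P : Measure Ω) [IsProbabilityMeasure P]
    {ι : Type*} [Fintype ι] [Nonempty ι] (X : ι → Ω → ℝ)
    (hmeas : ∀ p, Measurable (X p))
    (hlaw : ∀ p, Measure.map (X p) P = gaussianReal 0 1) :
    Integrable (fun ω => ⨆ p, |X p ω|) P ∧
      ∫ ω, (⨆ p, |X p ω|) ∂P
        ≤ Real.sqrt (2 * Real.log (2 * (Fintype.card ι : ℝ))) := by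
  have hK1 : (1:ℝ) ≤ (Fintype.card ι : ℝ) := by exact_mod_cast Fintype.card_pos
  set K : ℝ := (Fintype.card ι : ℝ) with hKdef
  have hlog : 0 < Real.log (2 * K) := Real.log_pos (by simp only [hKdef]; linarith)
  set t : ℝ := Real.sqrt (2 * Real.log (2 * K)) with ht
  have ht2 : t ^ 2 = 2 * Real.log (2 * K) := Real.sq_sqrt (by positivity)
  have htpos : 0 < t := Real.sqrt_pos.mpr (by positivity)
  set g : Ω → ℝ := fun ω => ⨆ p, |X p ω| with hgdef
  have hgmeas : Measurable g := Measurable.iSup fun p => (hmeas p).abs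
  have hle : ∀ ω p, |X p ω| ≤ g ω := fun ω p => le_csup (fun p => |X p ω|) p
  have hgnonneg : ∀ ω, 0 ≤ g ω := fun ω =>
    (abs_nonneg _).trans (hle ω (Classical.arbitrary ι))
  have habs : ∀ p, Integrable (fun ω => |X p ω|) P := fun p =>
    (comp_integrable (hmeas p) (hlaw p) measurable_id integrable_id).abs
  have hgi : Integrable g P := by
    refine Integrable.mono' (integrable_finset_sum Finset.univ fun p _ => habs p)
      hgmeas.aestronglyMeasurable (Filter.Eventually.of_forall fun ω => ?_)
    rw [Real.norm_eq_abs, abs_of_nonneg (hgnonneg ω)]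
    exact ciSup_le fun p =>
      Finset.single_le_sum (f := fun q => |X q ω|) (fun q _ => abs_nonneg _)
        (Finset.mem_univ p)
  have hexpXi : ∀ (s : ℝ) (p : ι), Integrable (fun ω => rexp (s * X p ω)) P := fun s p =>
    comp_integrable (hmeas p) (hlaw p)
      (Real.measurable_exp.comp (measurable_id.const_mul s)) (exp_integrable s)
  have hpt : ∀ ω, rexp (t * g ω) ≤ ∑ p : ι, (rexp (t * X p ω) + rexp (-t * X p ω)) := by
    intro ω
    obtain ⟨p, -, hp⟩ := Finset.exists_mem_eq_sup' (Finset.univ_nonempty) (fun p => |X p ω|)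
    have hgp : g ω = |X p ω| := by
      simp only [hgdef]; rw [← Finset.sup'_univ_eq_ciSup]; exact hp
    calc rexp (t * g ω) = rexp (t * |X p ω|) := by rw [hgp]
      _ ≤ rexp (t * X p ω) + rexp (-t * X p ω) := by
          rcases abs_cases (X p ω) with ⟨h1, _⟩ | ⟨h1, _⟩
          · rw [h1]; nlinarith [Real.exp_pos (-t * X p ω)]
          · rw [h1, show t * -X p ω = -t * X p ω by ring]
            nlinarith [Real.exp_pos (t * X p ω)]
      _ ≤ ∑ q : ι, (rexp (t * X q ω) + rexp (-t * X q ω)) :=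
          Finset.single_le_sum (f := fun q => rexp (t * X q ω) + rexp (-t * X q ω))
            (fun q _ => by positivity) (Finset.mem_univ p)
  have hsumint : Integrable (fun ω => ∑ p : ι, (rexp (t * X p ω) + rexp (-t * X p ω))) P :=
    integrable_finset_sum Finset.univ fun p _ => (hexpXi t p).add (hexpXi (-t) p)
  have hexpg : Integrable (fun ω => rexp (t * g ω)) P := by
    refine Integrable.mono' hsumint
      (Real.measurable_exp.comp (hgmeas.const_mul t)).aestronglyMeasurable
      (Filter.Eventually.of_forall fun ω => ?_)
    rw [Real.norm_eq_abs, abs_of_nonneg (Real.exp_pos _).le]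
    exact hpt ω
  have hjensen : rexp (t * ∫ ω, g ω ∂P) ≤ ∫ ω, rexp (t * g ω) ∂P := by
    have h := convexOn_exp.map_integral_le (μ := P) (f := fun ω => t * g ω)
      Real.continuous_exp.continuousOn isClosed_univ
      (Filter.Eventually.of_forall fun ω => Set.mem_univ _)
      (hgi.const_mul t) (by exact hexpg)
    rwa [integral_const_mul] at h
  have hsum : ∫ ω, rexp (t * g ω) ∂P ≤ 2 * K * rexp (t ^ 2 / 2) := by
    have h1 : ∫ ω, rexp (t * g ω) ∂P
        ≤ ∫ ω, ∑ p : ι, (rexp (t * X p ω) + rexp (-t * X p ω)) ∂P :=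
      integral_mono hexpg hsumint hpt
    have h2 : ∫ ω, ∑ p : ι, (rexp (t * X p ω) + rexp (-t * X p ω)) ∂P
        = ∑ _p : ι, (rexp (t ^ 2 / 2) + rexp (t ^ 2 / 2)) := by
      rw [integral_finset_sum Finset.univ
        (f := fun p ω => rexp (t * X p ω) + rexp (-t * X p ω))
        (fun p _ => (hexpXi t p).add (hexpXi (-t) p))]
      refine Finset.sum_congr rfl fun p _ => ?_
      rw [integral_add (hexpXi t p) (hexpXi (-t) p),
        exp_moment (hmeas p) (hlaw p) t, exp_moment (hmeas p) (hlaw p) (-t), neg_pow]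
      norm_num
    rw [h2] at h1
    refine h1.trans_eq ?_
    rw [Finset.sum_const, Finset.card_univ, nsmul_eq_mul]
    rw [hKdef]; ring
  have hfin : t * ∫ ω, g ω ∂P ≤ Real.log (2 * K) + t ^ 2 / 2 := by
    have : rexp (t * ∫ ω, g ω ∂P) ≤ rexp (Real.log (2 * K) + t ^ 2 / 2) := by
      refine (hjensen.trans hsum).trans_eq ?_
      rw [Real.exp_add, Real.exp_log (by positivity)]
    exact Real.exp_le_exp.mp this
  refine ⟨hgi, ?_⟩
  have : t * ∫ ω, g ω ∂P ≤ t * t := by nlinarith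
  exact le_of_mul_le_mul_left this htpos

end RGB

/-- **(HF) and the bound on `ρ_M` for Gaussian-driven Euler dynamics** (Remark 4.2).
If `F(x,a,ε) = b(x,a) + σ(x,a)ε` with `b`, `σ` Lipschitz in `(x,a)` with constants
`[b]_L`, `[σ]_L`, and `ε ∼ N(0, I_d)`, then (HF) holds with
`C(ε) = [b]_L + [σ]_L ‖ε‖_d`, and
`ρ_M = E[sup_{1≤m≤M} C(ε^m)] ≤ [b]_L + d [σ]_L √(2 log(2dM))`;
in particular `ρ_M = O(√(log M))` as `M → ∞`. -/
theorem rho_gaussian_bound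
    {d q : ℕ} (hd : 0 < d)
    -- drift and diffusion coefficients, Lipschitz in (x,a)
    (b : Sp d → Sp q → Sp d) (σm : Sp d → Sp q → (Sp d →L[ℝ] Sp d))
    (bL σL : ℝ) (hbL : 0 ≤ bL) (hσL : 0 ≤ σL)
    (hb_lip : ∀ x a x' a', ‖b x a - b x' a'‖ ≤ bL * (‖x - x'‖ + ‖a - a'‖))
    (hσ_lip : ∀ x a x' a', ‖σm x a - σm x' a'‖ ≤ σL * (‖x - x'‖ + ‖a - a'‖))
    -- the dynamics
    (F : Sp d → Sp q → Sp d → Sp d)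
    (hF : ∀ x a e, F x a e = b x a + σm x a e)
    -- i.i.d. noise ε^m ∼ N(0, I_d): independent standard Gaussian coordinates
    {Ω : Type*} [MeasurableSpace Ω] (P : Measure Ω) [IsProbabilityMeasure P]
    (eps : ℕ → Ω → Sp d)
    (h_meas : ∀ m, Measurable (eps m))
    (h_law : ∀ (m : ℕ) (i : Fin d),
      Measure.map (fun ω => eps m ω i) P = gaussianReal 0 1)
    (h_indep : iIndepFun
      (fun (mi : ℕ × Fin d) ω => eps mi.1 ω mi.2) P) :
    -- (HF) holds with C(ε) = [b]_L + [σ]_L ‖ε‖_d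
    (∀ (x x' : Sp d) (a a' : Sp q) (e : Sp d),
      ‖F x a e - F x' a' e‖ ≤ (bL + σL * ‖e‖) * (‖x - x'‖ + ‖a - a'‖))
    ∧
    -- ρ_M ≤ [b]_L + d [σ]_L √(2 log(2 d M))
    (∀ M : ℕ, 1 ≤ M →
      ∫ ω, (⨆ m : Fin M, (bL + σL * ‖eps m ω‖)) ∂P
        ≤ bL + d * σL * Real.sqrt (2 * Real.log (2 * d * M)))
    ∧
    -- in particular ρ_M = O(√(log M)) as M → ∞
    ((fun M : ℕ => ∫ ω, (⨆ m : Fin M, (bL + σL * ‖eps m ω‖)) ∂P)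
      =O[atTop] fun M : ℕ => Real.sqrt (Real.log M)) := by
  -- Part 1: the Lipschitz estimate (HF)
  have h1 : ∀ (x x' : Sp d) (a a' : Sp q) (e : Sp d),
      ‖F x a e - F x' a' e‖ ≤ (bL + σL * ‖e‖) * (‖x - x'‖ + ‖a - a'‖) := by
    intro x x' a a' e
    rw [hF, hF]
    have hdiff : b x a + σm x a e - (b x' a' + σm x' a' e)
        = (b x a - b x' a') + (σm x a - σm x' a') e := by
      rw [ContinuousLinearMap.sub_apply]; abel
    rw [hdiff]
    have hn := norm_add_le (b x a - b x' a') ((σm x a - σm x' a') e)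
    have h2 := hb_lip x a x' a'
    have h5 : ‖(σm x a - σm x' a') e‖ ≤ σL * (‖x - x'‖ + ‖a - a'‖) * ‖e‖ :=
      ((σm x a - σm x' a').le_opNorm e).trans
        (mul_le_mul_of_nonneg_right (hσ_lip x a x' a') (norm_nonneg e))
    nlinarith [norm_nonneg e]
  -- nonnegativity of the sup
  have hSnn : ∀ (M : ℕ), 0 < M → ∀ ω, 0 ≤ ⨆ m : Fin M, (bL + σL * ‖eps m ω‖) := by
    intro M hM ω
    haveI : Nonempty (Fin M) := Fin.pos_iff_nonempty.mp hM
    have hle : bL + σL * ‖eps (Classical.arbitrary (Fin M) : Fin M) ω‖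
        ≤ ⨆ m : Fin M, (bL + σL * ‖eps m ω‖) :=
      RGB.le_csup (fun m : Fin M => bL + σL * ‖eps m ω‖) _
    nlinarith [norm_nonneg (eps (Classical.arbitrary (Fin M) : Fin M) ω)]
  -- Part 2
  have h2 : ∀ M : ℕ, 1 ≤ M →
      ∫ ω, (⨆ m : Fin M, (bL + σL * ‖eps m ω‖)) ∂P
        ≤ bL + d * σL * Real.sqrt (2 * Real.log (2 * d * M)) := by
    intro M hM
    haveI : Nonempty (Fin M) := Fin.pos_iff_nonempty.mp (by omega)
    haveI : Nonempty (Fin d) := Fin.pos_iff_nonempty.mp hd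
    set X : Fin M × Fin d → Ω → ℝ := fun p ω => eps p.1 ω p.2 with hXdef
    have hXmeas : ∀ p, Measurable (X p) := fun p =>
      (measurable_pi_apply p.2).comp ((WithLp.measurable_ofLp _ _).comp (h_meas p.1))
    obtain ⟨hgi, hgle⟩ := RGB.max_bound P X hXmeas (fun p => h_law p.1 p.2)
    set g : Ω → ℝ := fun ω => ⨆ p : Fin M × Fin d, |X p ω| with hgdef
    have hc : (2 : ℝ) * (Fintype.card (Fin M × Fin d) : ℝ) = 2 * (d:ℝ) * (M:ℝ) := by
      simp [Fintype.card_prod, Fintype.card_fin]; ring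
    rw [hc] at hgle
    have habove : ∀ ω p, |X p ω| ≤ g ω := fun ω p => RGB.le_csup (fun p => |X p ω|) p
    have hgnn : ∀ ω, 0 ≤ g ω := fun ω =>
      (abs_nonneg _).trans (habove ω (Classical.arbitrary _))
    have hd1 : (1:ℝ) ≤ (d:ℝ) := by exact_mod_cast hd
    have hnorm : ∀ (m : Fin M) ω, ‖eps m ω‖ ≤ (d:ℝ) * g ω := by
      intro m ω
      rw [EuclideanSpace.norm_eq]
      have hsum : ∑ i : Fin d, ‖eps (m:ℕ) ω i‖ ^ 2 ≤ (d : ℝ) * (g ω) ^ 2 := by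
        calc ∑ i : Fin d, ‖eps (m:ℕ) ω i‖ ^ 2 ≤ ∑ _i : Fin d, (g ω) ^ 2 := by
              refine Finset.sum_le_sum fun i _ => ?_
              have h := habove ω (m, i)
              have h0 : ‖eps (m:ℕ) ω i‖ = |eps (m:ℕ) ω i| := Real.norm_eq_abs _
              rw [h0]
              nlinarith [abs_nonneg (eps (m:ℕ) ω i)]
          _ = (d : ℝ) * (g ω) ^ 2 := by
              rw [Finset.sum_const, Finset.card_univ, Fintype.card_fin, nsmul_eq_mul]
      calc Real.sqrt (∑ i : Fin d, ‖eps (m:ℕ) ω i‖ ^ 2)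
          ≤ Real.sqrt ((d:ℝ) ^ 2 * (g ω) ^ 2) :=
            Real.sqrt_le_sqrt (by
              nlinarith [mul_nonneg (mul_nonneg (Nat.cast_nonneg d : (0:ℝ) ≤ (d:ℝ))
                (sub_nonneg.mpr hd1)) (sq_nonneg (g ω))])
        _ = (d:ℝ) * g ω := by
            rw [← mul_pow, Real.sqrt_sq (mul_nonneg (by positivity) (hgnn ω))]
    have hSle : ∀ ω, (⨆ m : Fin M, (bL + σL * ‖eps m ω‖)) ≤ bL + (σL * d) * g ω := by
      intro ω
      refine ciSup_le fun m => ?_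
      have h := hnorm m ω
      nlinarith [hgnn ω]
    have hRHSint : Integrable (fun ω => bL + (σL * d) * g ω) P :=
      (integrable_const bL).add (hgi.const_mul _)
    have hmono : ∫ ω, (⨆ m : Fin M, (bL + σL * ‖eps m ω‖)) ∂P
        ≤ ∫ ω, (bL + (σL * d) * g ω) ∂P :=
      integral_mono_of_nonneg (Filter.Eventually.of_forall (hSnn M (by omega)))
        hRHSint (Filter.Eventually.of_forall hSle)
    have hval : ∫ ω, (bL + (σL * d) * g ω) ∂P = bL + (σL * d) * ∫ ω, g ω ∂P := by
      rw [integral_add (integrable_const _) (hgi.const_mul _), integral_const,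
        integral_const_mul]
      simp
    refine hmono.trans ?_
    rw [hval]
    have h3 : (σL * d) * ∫ ω, g ω ∂P
        ≤ (d:ℝ) * σL * Real.sqrt (2 * Real.log (2 * d * M)) := by
      calc (σL * d) * ∫ ω, g ω ∂P
          ≤ (σL * d) * Real.sqrt (2 * Real.log (2 * d * M)) :=
            mul_le_mul_of_nonneg_left hgle (by positivity)
        _ = (d:ℝ) * σL * Real.sqrt (2 * Real.log (2 * d * M)) := by ring
    linarith
  refine ⟨h1, h2, ?_⟩
  -- Part 3
  rw [Asymptotics.isBigO_iff]
  have hlog2 : 0 < Real.log 2 := Real.log_pos one_lt_two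
  have hd1 : (1:ℝ) ≤ (d:ℝ) := by exact_mod_cast hd
  refine ⟨bL / Real.sqrt (Real.log 2)
    + d * σL * Real.sqrt (2 * (Real.log (2 * d) / Real.log 2 + 1)), ?_⟩
  filter_upwards [Filter.eventually_ge_atTop 2] with M hM
  have hM1 : 1 ≤ M := by omega
  have hρnn : 0 ≤ ∫ ω, (⨆ m : Fin M, (bL + σL * ‖eps m ω‖)) ∂P :=
    integral_nonneg (hSnn M (by omega))
  have hM2 : (2:ℝ) ≤ (M:ℝ) := by exact_mod_cast hM
  have hlogM : Real.log 2 ≤ Real.log M := Real.log_le_log two_pos hM2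
  have hlogMpos : 0 < Real.log M := lt_of_lt_of_le hlog2 hlogM
  have hsq : Real.sqrt (Real.log 2) ≤ Real.sqrt (Real.log M) := Real.sqrt_le_sqrt hlogM
  have hsq2 : 0 < Real.sqrt (Real.log 2) := Real.sqrt_pos.mpr hlog2
  have hbLb : bL ≤ bL / Real.sqrt (Real.log 2) * Real.sqrt (Real.log M) := by
    rw [div_mul_eq_mul_div, le_div_iff₀ hsq2]
    exact mul_le_mul_of_nonneg_left hsq hbL
  have hlog2d : 0 ≤ Real.log (2 * (d:ℝ)) := Real.log_nonneg (by linarith)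
  have hsplit : Real.log (2 * (d:ℝ) * (M:ℝ)) = Real.log (2 * (d:ℝ)) + Real.log M :=
    Real.log_mul (by positivity) (by positivity)
  have hlogbound : 2 * Real.log (2 * (d:ℝ) * (M:ℝ))
      ≤ 2 * (Real.log (2 * (d:ℝ)) / Real.log 2 + 1) * Real.log M := by
    rw [hsplit]
    have h : Real.log (2 * (d:ℝ)) ≤ Real.log (2 * (d:ℝ)) / Real.log 2 * Real.log M := by
      rw [div_mul_eq_mul_div, le_div_iff₀ hlog2]
      exact mul_le_mul_of_nonneg_left hlogM hlog2d
    nlinarith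
  have hsqrtbound : Real.sqrt (2 * Real.log (2 * (d:ℝ) * (M:ℝ)))
      ≤ Real.sqrt (2 * (Real.log (2 * (d:ℝ)) / Real.log 2 + 1)) * Real.sqrt (Real.log M) := by
    rw [← Real.sqrt_mul (by positivity)]
    exact Real.sqrt_le_sqrt hlogbound
  have hmain := h2 M hM1
  rw [Real.norm_eq_abs, Real.norm_eq_abs, abs_of_nonneg hρnn,
    abs_of_nonneg (Real.sqrt_nonneg _)]
  have hdσ : 0 ≤ (d:ℝ) * σL := by positivity
  calc ∫ ω, (⨆ m : Fin M, (bL + σL * ‖eps m ω‖)) ∂P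
      ≤ bL + d * σL * Real.sqrt (2 * Real.log (2 * d * M)) := hmain
    _ ≤ bL / Real.sqrt (Real.log 2) * Real.sqrt (Real.log M)
        + d * σL * (Real.sqrt (2 * (Real.log (2 * (d:ℝ)) / Real.log 2 + 1))
          * Real.sqrt (Real.log M)) :=
        add_le_add hbLb (mul_le_mul_of_nonneg_left hsqrtbound hdσ)
    _ = (bL / Real.sqrt (Real.log 2)
        + d * σL * Real.sqrt (2 * (Real.log (2 * (d:ℝ)) / Real.log 2 + 1)))
          * Real.sqrt (Real.log M) := by ring
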